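/- Let V ∈ ℝ^{n×k} with VᵀQV = I_k, Z ∈ ℝ^{n×k} with ZᵀZ = I_k, D ∈ ℝ^{k×k} diagonal, z, ξ vectors with x = Q V z + δ^{−1/2} Q^{1/2}(I_n − Z D Zᵀ)ξ. Then the prior norm of x can be evaluated without applying Q⁻¹: xᵀ Q⁻¹ x = zᵀz + 2 δ^{−1/2} zᵀ Vᵀ Q^{1/2}(I_n − Z D Zᵀ)ξ + δ⁻¹ ξᵀ(I_n + Z(D² − 2D)Zᵀ)ξ. -/
import Mathlib

open Matrix

lemma aux_dot {n m l : ℕ} (A : Matrix (Fin n) (Fin m) ℝ) (B : Matrix (Fin n) (Fin l) ℝ)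
    (u : Fin m → ℝ) (v : Fin l → ℝ) :
    (A *ᵥ u) ⬝ᵥ (B *ᵥ v) = u ⬝ᵥ ((Aᵀ * B) *ᵥ v) := by
  rw [← mulVec_mulVec, ← vecMul_transpose, ← dotProduct_mulVec]

theorem prior_norm_without_Qinv
    {n k : ℕ} (hk1 : 1 ≤ k) (hkn : k ≤ n)
    (Q : Matrix (Fin n) (Fin n) ℝ) (hQ : Q.PosDef)
    (S : Matrix (Fin n) (Fin n) ℝ) (hS : S.PosDef) (hSQ : S * S = Q)
    (del : ℝ) (hdel : 0 < del)
    (V : Matrix (Fin n) (Fin k) ℝ) (hV : Vᵀ * Q * V = 1)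
    (Z : Matrix (Fin n) (Fin k) ℝ) (hZ : Zᵀ * Z = 1)
    (d : Fin k → ℝ) (D : Matrix (Fin k) (Fin k) ℝ) (hD : D = Matrix.diagonal d)
    (z : Fin k → ℝ) (ξ : Fin n → ℝ) (x : Fin n → ℝ)
    (hx : x = Q *ᵥ (V *ᵥ z) +
      (Real.sqrt del)⁻¹ • (S *ᵥ ((1 - Z * D * Zᵀ) *ᵥ ξ))) :
    x ⬝ᵥ (Q⁻¹ *ᵥ x)
      = z ⬝ᵥ z
        + 2 * (Real.sqrt del)⁻¹ * (z ⬝ᵥ (Vᵀ *ᵥ (S *ᵥ ((1 - Z * D * Zᵀ) *ᵥ ξ))))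
        + del⁻¹ * (ξ ⬝ᵥ ((1 + Z * (D * D - (2 : ℝ) • D) * Zᵀ) *ᵥ ξ)) := by
  have hSsym : Sᵀ = S := hS.1
  have hQsym : Qᵀ = Q := hQ.1
  have hSunit : IsUnit S.det := isUnit_iff_ne_zero.mpr hS.det_pos.ne'
  have hQunit : IsUnit Q.det := isUnit_iff_ne_zero.mpr hQ.det_pos.ne'
  have hSinv : S⁻¹ * S = 1 := nonsing_inv_mul S hSunit
  have hSinv' : S * S⁻¹ = 1 := mul_nonsing_inv S hSunit
  have hQinv : Q⁻¹ = S⁻¹ * S⁻¹ := by rw [← hSQ, Matrix.mul_inv_rev]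
  set c : ℝ := (Real.sqrt del)⁻¹ with hc
  have hc2 : c * c = del⁻¹ := by
    rw [hc, ← mul_inv, Real.mul_self_sqrt hdel.le]
  set M : Matrix (Fin n) (Fin n) ℝ := 1 - Z * D * Zᵀ with hM
  have hDsym : Dᵀ = D := by rw [hD]; exact (Matrix.diagonal_transpose d)
  have hMsym : Mᵀ = M := by
    rw [hM, transpose_sub, transpose_one, transpose_mul, transpose_mul,
      transpose_transpose, hDsym, ← Matrix.mul_assoc]
  have hMM : Mᵀ * M = 1 + Z * (D * D - (2 : ℝ) • D) * Zᵀ := by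
    rw [hMsym, hM]
    have h1 : Z * D * Zᵀ * (Z * D * Zᵀ) = Z * (D * D) * Zᵀ := by
      simp only [← Matrix.mul_assoc]
      rw [Matrix.mul_assoc (Z * D) Zᵀ Z, hZ, Matrix.mul_one]
    have h2 : Z * (D * D - (2 : ℝ) • D) * Zᵀ
        = Z * (D * D) * Zᵀ - (2 : ℝ) • (Z * D * Zᵀ) := by
      rw [Matrix.mul_sub, Matrix.sub_mul, Matrix.mul_smul, Matrix.smul_mul]
    rw [sub_mul, one_mul, mul_sub, mul_one, h1, h2, two_smul]
    abel
  have hQiQ : Q⁻¹ *ᵥ (Q *ᵥ (V *ᵥ z)) = V *ᵥ z := by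
    rw [mulVec_mulVec, nonsing_inv_mul Q hQunit, one_mulVec]
  have hQiS : ∀ w : Fin n → ℝ, Q⁻¹ *ᵥ (S *ᵥ w) = S⁻¹ *ᵥ w := by
    intro w
    rw [mulVec_mulVec, hQinv, Matrix.mul_assoc, hSinv, Matrix.mul_one]
  rw [hx]
  rw [mulVec_add, mulVec_smul, hQiS, hQiQ]
  rw [add_dotProduct, dotProduct_add, dotProduct_add, smul_dotProduct,
    dotProduct_smul, dotProduct_smul]
  have t1 : (Q *ᵥ (V *ᵥ z)) ⬝ᵥ (V *ᵥ z) = z ⬝ᵥ z := by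
    rw [mulVec_mulVec, aux_dot, transpose_mul, hQsym, hV, one_mulVec]
  have t2 : ∀ w : Fin n → ℝ,
      (Q *ᵥ (V *ᵥ z)) ⬝ᵥ (S⁻¹ *ᵥ w) = z ⬝ᵥ (Vᵀ *ᵥ (S *ᵥ w)) := by
    intro w
    rw [mulVec_mulVec, aux_dot, transpose_mul, hQsym]
    have h : Vᵀ * Q * S⁻¹ = Vᵀ * S := by
      rw [← hSQ, Matrix.mul_assoc Vᵀ (S * S) S⁻¹, Matrix.mul_assoc S S S⁻¹,
        hSinv', Matrix.mul_one]
    rw [h, mulVec_mulVec]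
  have t2' : ∀ w : Fin n → ℝ,
      (S *ᵥ w) ⬝ᵥ (V *ᵥ z) = z ⬝ᵥ (Vᵀ *ᵥ (S *ᵥ w)) := by
    intro w
    rw [dotProduct_comm, aux_dot, mulVec_mulVec]
  have t3 : (S *ᵥ (M *ᵥ ξ)) ⬝ᵥ (S⁻¹ *ᵥ (M *ᵥ ξ))
      = ξ ⬝ᵥ ((1 + Z * (D * D - (2 : ℝ) • D) * Zᵀ) *ᵥ ξ) := by
    rw [aux_dot, hSsym, hSinv', one_mulVec, aux_dot, hMM]
  rw [t1, t2, t2']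
  simp only [smul_dotProduct, dotProduct_smul, smul_eq_mul]
  rw [t3, ← hc2]
  ring
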